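/- arXiv:2011.03948 — 5 statements merged into one kernel-verified Lean document; each statement's English description precedes it below -/
import Mathlib

section
/- For every positive integer n divisible by 4, there exists an n-vertex graph G' with minimum degree δ(G') = 3n/4 and a 2-colouring of the edges of G' such that every Hamilton cycle in G' has precisely n/2 edges of each colour. -/
/-- The number of edges in the list `l` receiving colour `c` under the colouring `col`. -/
def colourCount {V : Type*} {r : ℕ} (col : Sym2 V → Fin r) (l : List (Sym2 V)) (c : Fin r) : ℕ :=
  l.countP (fun e => col e = c)

lemma aux_countP_or {α : Type*} (p q : α → Prop) [DecidablePred p] [DecidablePred q]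
    (l : List α) (h : ∀ a ∈ l, ¬(p a ∧ q a)) :
    l.countP (fun a => decide (p a ∨ q a)) =
      l.countP (fun a => decide (p a)) + l.countP (fun a => decide (q a)) := by
  induction l with
  | nil => simp
  | cons a t ih =>
    have ha := h a (by simp)
    have ht : ∀ a ∈ t, ¬(p a ∧ q a) := fun a h' => h a (by simp [h'])
    rw [List.countP_cons, List.countP_cons, List.countP_cons, ih ht]
    have e1 : (if decide (p a ∨ q a) = true then 1 else 0)
        = (if decide (p a) = true then 1 else 0) + (if decide (q a) = true then 1 else 0) := by
      by_cases hp : p a <;> by_cases hq : q a <;> simp_all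
    omega

lemma aux_countP_compl {α : Type*} (p q : α → Prop) [DecidablePred p] [DecidablePred q]
    (l : List α) (h : ∀ a ∈ l, q a ↔ ¬ p a) :
    l.countP (fun a => decide (q a)) + l.countP (fun a => decide (p a)) = l.length := by
  induction l with
  | nil => simp
  | cons a t ih =>
    have ha := h a (by simp)
    have ht : ∀ a ∈ t, q a ↔ ¬ p a := fun a h' => h a (by simp [h'])
    rw [List.countP_cons, List.countP_cons, List.length_cons]
    have e1 : (if decide (q a) = true then 1 else 0) + (if decide (p a) = true then 1 else 0)
        = 1 := by
      by_cases hp : p a <;> simp_all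
    have := ih ht
    omega

lemma aux_countP_univ {α : Type*} [DecidableEq α] [Fintype α] (l : List α)
    (h : ∀ a, l.count a = 1) (p : α → Prop) [DecidablePred p] :
    l.countP (fun a => decide (p a)) = (Finset.univ.filter p).card := by
  have hnd : l.Nodup := List.nodup_iff_count_le_one.2 fun a => (h a).le
  have hts : (l.filter (fun a => decide (p a))).toFinset = Finset.univ.filter p := by
    ext a
    have : a ∈ l := List.count_pos_iff.1 (by rw [h a]; norm_num)
    simp [List.mem_filter, this]
  rw [List.countP_eq_length_filter, ← List.toFinset_card_of_nodup (hnd.filter _), hts]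

theorem extremal_example_two_colours (n : ℕ) (hn : 0 < n) (h4 : 4 ∣ n) :
    ∃ (G : SimpleGraph (Fin n)) (_ : DecidableRel G.Adj) (col : Sym2 (Fin n) → Fin 2),
      G.minDegree = 3 * n / 4 ∧
      ∀ (v : Fin n) (C : G.Walk v v), C.IsHamiltonianCycle →
        ∀ i : Fin 2, colourCount col C.edges i = n / 2 := by
  obtain ⟨k, rfl⟩ := h4
  have hk : 0 < k := by omega
  set G : SimpleGraph (Fin (4 * k)) :=
    { Adj := fun u v => u ≠ v ∧ (k ≤ (u : ℕ) ∨ k ≤ (v : ℕ))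
      symm := ⟨fun u v h => ⟨h.1.symm, h.2.symm⟩⟩
      loopless := ⟨fun u h => h.1 rfl⟩ } with hG
  have hAdj : ∀ u v, G.Adj u v ↔ u ≠ v ∧ (k ≤ (u : ℕ) ∨ k ≤ (v : ℕ)) := fun u v => Iff.rfl
  set col : Sym2 (Fin (4 * k)) → Fin 2 := Sym2.lift
    ⟨fun u v => if (u : ℕ) < k ∨ (v : ℕ) < k then 0 else 1, fun u v => by
      simp [or_comm]⟩ with hcol
  refine ⟨G, fun u v => instDecidableAnd, col, ?_, ?_⟩
  · -- minDegree
    have h3 : 3 * (4 * k) / 4 = 3 * k := by omega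
    rw [h3]
    haveI : Nonempty (Fin (4 * k)) := ⟨⟨0, by omega⟩⟩
    have hIci : (Finset.Ici (⟨k, by omega⟩ : Fin (4 * k))).card = 3 * k := by
      rw [Fin.card_Ici]; show 4 * k - k = 3 * k; omega
    apply le_antisymm
    · have hdeg : G.degree ⟨0, by omega⟩ = 3 * k := by
        rw [SimpleGraph.degree, ← hIci]
        congr 1
        rw [SimpleGraph.neighborFinset_eq_filter]
        ext u
        simp only [Finset.mem_filter, Finset.mem_univ, true_and, Finset.mem_Ici, hAdj]
        constructor
        · rintro ⟨h1, h2 | h2⟩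
          · exact absurd h2 (by omega)
          · exact h2
        · intro hu
          have hu' : k ≤ (u : ℕ) := hu
          refine ⟨fun he => ?_, Or.inr hu'⟩
          have h0 : (u : ℕ) = 0 := by rw [← he]
          omega
      rw [← hdeg]
      exact SimpleGraph.minDegree_le_degree _ _
    · apply SimpleGraph.le_minDegree_of_forall_le_degree
      intro v
      by_cases hv : (v : ℕ) < k
      · have hsub : Finset.Ici (⟨k, by omega⟩ : Fin (4 * k)) ⊆ G.neighborFinset v := by
          intro u hu
          rw [Finset.mem_Ici] at hu
          have hu' : k ≤ (u : ℕ) := hu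
          rw [SimpleGraph.mem_neighborFinset, hAdj]
          exact ⟨fun he => by rw [he] at hv; omega, Or.inr hu'⟩
        calc 3 * k = _ := hIci.symm
          _ ≤ _ := Finset.card_le_card hsub
      · have hsub : Finset.univ.erase v ⊆ G.neighborFinset v := by
          intro u hu
          rw [Finset.mem_erase] at hu
          rw [SimpleGraph.mem_neighborFinset, hAdj]
          exact ⟨Ne.symm hu.1, Or.inl (by omega)⟩
        have := Finset.card_le_card hsub
        rw [Finset.card_erase_of_mem (Finset.mem_univ v), Finset.card_univ,
          Fintype.card_fin] at this
        rw [SimpleGraph.degree]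
        omega
  · -- Hamilton cycles balanced
    intro v C hC i
    have hcount : ∀ a, C.support.tail.count a = 1 :=
      (SimpleGraph.Walk.isHamiltonianCycle_iff_isCycle_and_support_count_tail_eq_one.mp hC).2
    set t := C.support.tail with ht
    have ht_ne : t ≠ [] := by
      intro h0
      have := hcount v
      rw [h0] at this
      simp at this
    have hlast : t.getLast ht_ne = v :=
      (List.getLast_tail (l := C.support) ht_ne).trans C.getLast_support
    have hperm : C.support.dropLast.Perm t := by
      have h1 : C.support.dropLast = v :: t.dropLast := by
        conv_lhs => rw [C.support_eq_cons]
        exact List.dropLast_cons_of_ne_nil ht_ne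
      have h2 : t.dropLast ++ [v] = t := by
        conv_lhs => rw [← hlast]
        exact List.dropLast_append_getLast ht_ne
      have h3 : (v :: t.dropLast).Perm (t.dropLast ++ [v]) :=
        (List.perm_append_singleton _ _).symm
      have h4 : (t.dropLast ++ [v]).Perm t := by rw [h2]
      rw [h1]
      exact h3.trans h4
    have hcard : (Finset.univ.filter (fun u : Fin (4 * k) => (u : ℕ) < k)).card = k := by
      have : Finset.univ.filter (fun u : Fin (4 * k) => (u : ℕ) < k)
          = Finset.Iio (⟨k, by omega⟩ : Fin (4 * k)) := by
        ext u
        simp [Fin.lt_def]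
      rw [this, Fin.card_Iio]
    have hcount0 : colourCount col C.edges 0 = 2 * k := by
      unfold colourCount
      rw [SimpleGraph.Walk.edges, List.countP_map]
      have hstep : C.darts.countP ((fun e => decide (col e = (0 : Fin 2)))
            ∘ SimpleGraph.Dart.edge)
          = C.darts.countP (fun d => decide ((d.fst : ℕ) < k ∨ (d.snd : ℕ) < k)) := by
        apply List.countP_congr
        intro d _
        have hedge : d.edge = s(d.fst, d.snd) := rfl
        simp only [Function.comp_apply, hedge, hcol, Sym2.lift_mk]
        by_cases h : (d.fst : ℕ) < k ∨ (d.snd : ℕ) < k <;> simp [h]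
      rw [hstep]
      rw [aux_countP_or (fun d : G.Dart => (d.fst : ℕ) < k)
        (fun d : G.Dart => (d.snd : ℕ) < k) _
        (fun d _ => by
          have := d.adj
          rw [hAdj] at this
          omega)]
      have e1 := List.countP_map (p := fun u : Fin (4 * k) => decide ((u : ℕ) < k))
        (f := fun d : G.Dart => d.fst) (l := C.darts)
      rw [C.map_fst_darts] at e1
      have e2 := List.countP_map (p := fun u : Fin (4 * k) => decide ((u : ℕ) < k))
        (f := fun d : G.Dart => d.snd) (l := C.darts)
      rw [C.map_snd_darts] at e2
      have h1 : List.countP (fun d : G.Dart => decide ((d.fst : ℕ) < k)) C.darts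
          = List.countP (fun u : Fin (4 * k) => decide ((u : ℕ) < k)) t :=
        e1.symm.trans (hperm.countP_eq _)
      have h2 : List.countP (fun d : G.Dart => decide ((d.snd : ℕ) < k)) C.darts
          = List.countP (fun u : Fin (4 * k) => decide ((u : ℕ) < k)) t :=
        e2.symm
      have hu := aux_countP_univ t hcount (fun u : Fin (4 * k) => (u : ℕ) < k)
      rw [hcard] at hu
      rw [h1, h2, hu]
      omega
    have hlen : C.edges.length = 4 * k := by
      rw [SimpleGraph.Walk.length_edges, hC.length_eq, Fintype.card_fin]
    have h2k : 4 * k / 2 = 2 * k := by omega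
    rw [h2k]
    fin_cases i
    · exact hcount0
    · have hneg : ∀ e ∈ C.edges, (col e = (1 : Fin 2)) ↔ ¬ (col e = (0 : Fin 2)) := by
        intro e _
        generalize col e = x
        revert x
        decide
      have hsplit := aux_countP_compl (fun e => col e = (0 : Fin 2))
        (fun e => col e = (1 : Fin 2)) C.edges hneg
      beta_reduce at hsplit
      unfold colourCount at hcount0 ⊢
      show List.countP (fun e => decide (col e = (1 : Fin 2))) C.edges = 2 * k
      omega
end

section
/- Let r ≥ 2 and n be positive integers such that 2r divides n. Then there exists a graph G on n vertices with minimum degree δ(G) = (1/2 + 1/(2r))·n, and an r-colouring of the edges of G, such that every Hamilton cycle in G uses precisely n/r edges of each of the r colours. -/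
open Finset SimpleGraph

section Helpers

lemma countP_eq_sum_map {α : Type*} (l : List α) (p : α → Bool) :
    l.countP p = (l.map fun a => if p a then 1 else 0).sum := by
  induction l with
  | nil => simp
  | cons a l ih => by_cases h : p a <;> simp [List.countP_cons, h, ih] <;> omega

lemma sum_map_swap {α β : Type*} (l : List α) (s : Finset β) (f : β → α → ℕ) :
    ∑ b ∈ s, (l.map (f b)).sum = (l.map fun a => ∑ b ∈ s, f b a).sum := by
  induction l with
  | nil => simp
  | cons a l ih => simp [Finset.sum_add_distrib, ih]

lemma count_machinery {n : ℕ} (l : List (Sym2 (Fin n))) (p : Sym2 (Fin n) → Prop)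
    [DecidablePred p] (T : Finset (Fin n))
    (hT : ∀ e ∈ l, (if p e then 1 else 0) = ∑ v ∈ T, (if v ∈ e then 1 else 0))
    (h2 : ∀ v ∈ T, l.countP (fun e => decide (v ∈ e)) = 2) :
    l.countP (fun e => decide (p e)) = 2 * T.card := by
  have key : l.countP (fun e => decide (p e))
      = (l.map fun e => ∑ v ∈ T, (if v ∈ e then 1 else 0)).sum := by
    rw [countP_eq_sum_map]
    congr 1
    apply List.map_congr_left
    intro e he
    simpa using hT e he
  rw [key, ← sum_map_swap]
  have h3 : ∀ v ∈ T, (l.map fun e => if v ∈ e then 1 else 0).sum = 2 := by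
    intro v hv
    have h := h2 v hv
    rw [countP_eq_sum_map] at h
    simpa using h
  rw [Finset.sum_congr rfl h3, Finset.sum_const, smul_eq_mul, mul_comm]

lemma exists_edge_of_mem_support {V : Type*} {G : SimpleGraph V} {u v x : V}
    (p : G.Walk u v) (hx : x ∈ p.support) (h0 : 0 < p.length) :
    ∃ e ∈ p.edges, x ∈ e := by
  induction p with
  | nil => simp at h0
  | @cons a b c h q ih =>
    simp only [SimpleGraph.Walk.support_cons, List.mem_cons] at hx
    rcases hx with rfl | hx
    · exact ⟨s(x, b), by simp, by simp⟩
    · rcases Nat.eq_zero_or_pos q.length with hq | hq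
      · have hs : q.support = [b] := by
          have h1 : q.support.length = 1 := by
            rw [SimpleGraph.Walk.length_support, hq]
          have h2 : q.support = b :: q.support.tail := q.support_eq_cons
          rw [h2] at h1 ⊢
          simp only [List.length_cons, Nat.add_right_cancel_iff] at h1
          simp [List.eq_nil_of_length_eq_zero (by omega : q.support.tail.length = 0)]
        rw [hs] at hx
        simp at hx
        subst hx
        exact ⟨s(a, x), by simp, by simp⟩
      · obtain ⟨e, he, hxe⟩ := ih hx hq
        exact ⟨e, by simp [he], hxe⟩

lemma ham_two_count {n : ℕ} {G : SimpleGraph (Fin n)} {v : Fin n} {C : G.Walk v v}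
    (hC : C.IsHamiltonianCycle) (hn : 0 < n) (x : Fin n) :
    C.edges.countP (fun e => decide (x ∈ e)) = 2 := by
  classical
  have hlen : C.length = n := by simpa using hC.length_eq
  have hcard : ∀ y : Fin n, 2 ≤ C.edges.countP (fun e => decide (y ∈ e)) := by
    intro y
    have heven : Even (C.edges.countP fun e => decide (y ∈ e)) := by
      have := hC.isCycle.isTrail.even_countP_edges_iff y
      simpa using this
    have hpos : 0 < C.edges.countP fun e => decide (y ∈ e) := by
      rw [List.countP_pos_iff]
      obtain ⟨e, he, hye⟩ := exists_edge_of_mem_support C (hC.mem_support y) (by omega)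
      exact ⟨e, he, by simpa using hye⟩
    rcases heven with ⟨k, hk⟩
    omega
  have htot : ∑ y : Fin n, C.edges.countP (fun e => decide (y ∈ e)) = 2 * n := by
    have h1 : ∀ y : Fin n, C.edges.countP (fun e => decide (y ∈ e))
        = (C.edges.map fun e => if y ∈ e then 1 else 0).sum := by
      intro y; rw [countP_eq_sum_map]; simp
    rw [Finset.sum_congr rfl fun y _ => h1 y]
    have hswap : ∑ y : Fin n, (C.edges.map fun e => if y ∈ e then 1 else 0).sum
        = (C.edges.map fun e => ∑ y : Fin n, if y ∈ e then 1 else 0).sum := by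
      induction C.edges with
      | nil => simp
      | cons a l ih => simp [Finset.sum_add_distrib, ih]
    rw [hswap]
    have h2 : ∀ e ∈ C.edges, (∑ y : Fin n, if y ∈ e then 1 else 0) = 2 := by
      intro e he
      have hadj := C.edges_subset_edgeSet he
      induction e with
      | h a b =>
        rw [SimpleGraph.mem_edgeSet] at hadj
        have hab : a ≠ b := hadj.ne
        have hsplit : ∀ y : Fin n, (if y ∈ s(a,b) then 1 else 0)
            = (if y = a then 1 else 0) + (if y = b then 1 else 0) := by
          intro y
          by_cases h1 : y = a <;> by_cases h2 : y = b <;> simp_all [Sym2.mem_iff]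
        rw [Finset.sum_congr rfl fun y _ => hsplit y, Finset.sum_add_distrib]
        simp
    rw [List.map_congr_left h2]
    simp [List.sum_replicate, SimpleGraph.Walk.length_edges, hlen, mul_comm]
  by_contra hne
  have hlt : 2 * n < ∑ y : Fin n, C.edges.countP (fun e => decide (y ∈ e)) := by
    have := Finset.sum_lt_sum (f := fun _ : Fin n => 2)
      (g := fun y : Fin n => C.edges.countP (fun e => decide (y ∈ e)))
      (fun y _ => hcard y) ⟨x, Finset.mem_univ x, lt_of_le_of_ne (hcard x) (Ne.symm hne)⟩
    simpa [mul_comm] using this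
  omega

end Helpers

section Construction

/-- The extremal graph: all edges except those inside the initial segment `[0, k)`. -/
def exGraph (n k : ℕ) : SimpleGraph (Fin n) where
  Adj u v := u ≠ v ∧ ¬((u : ℕ) < k ∧ (v : ℕ) < k)
  symm := by constructor; intro u v ⟨h1, h2⟩; exact ⟨h1.symm, fun ⟨a, b⟩ => h2 ⟨b, a⟩⟩
  loopless := by constructor; intro v h; exact h.1 rfl

instance exGraphDec (n k : ℕ) : DecidableRel (exGraph n k).Adj := fun u v =>
  inferInstanceAs (Decidable (u ≠ v ∧ ¬((u : ℕ) < k ∧ (v : ℕ) < k)))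

lemma card_filter_Ico (n a b : ℕ) (hb : b ≤ n) :
    (Finset.univ.filter fun v : Fin n => a ≤ (v : ℕ) ∧ (v : ℕ) < b).card = b - a := by
  rw [← Nat.card_Ico a b]
  refine Finset.card_bij (fun (v : Fin n) _ => (v : ℕ)) ?_ ?_ ?_
  · intro v hv
    simp only [Finset.mem_filter] at hv
    exact Finset.mem_Ico.2 hv.2
  · intro v _ w _ h
    exact Fin.val_injective h
  · intro x hx
    rw [Finset.mem_Ico] at hx
    exact ⟨⟨x, lt_of_lt_of_le hx.2 hb⟩, by simp [hx.1, hx.2], rfl⟩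

lemma exGraph_degree_small (n k : ℕ) (v : Fin n) (hv : (v : ℕ) < k) :
    (exGraph n k).degree v = n - k := by
  rw [SimpleGraph.degree, SimpleGraph.neighborFinset_eq_filter]
  have heq : (Finset.univ.filter fun u : Fin n => (exGraph n k).Adj v u)
      = Finset.univ.filter fun u : Fin n => k ≤ (u : ℕ) ∧ (u : ℕ) < n := by
    apply Finset.filter_congr
    intro u _
    show (v ≠ u ∧ ¬((v : ℕ) < k ∧ (u : ℕ) < k)) ↔ _
    constructor
    · rintro ⟨h1, h2⟩
      exact ⟨by omega, u.isLt⟩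
    · rintro ⟨h1, _⟩
      refine ⟨fun h => ?_, by omega⟩
      subst h; omega
  rw [heq, card_filter_Ico n k n le_rfl]

lemma exGraph_degree_big (n k : ℕ) (v : Fin n) (hv : k ≤ (v : ℕ)) :
    (exGraph n k).degree v = n - 1 := by
  rw [SimpleGraph.degree, SimpleGraph.neighborFinset_eq_filter]
  have heq : (Finset.univ.filter fun u : Fin n => (exGraph n k).Adj v u)
      = Finset.univ.filter fun u : Fin n => u ≠ v := by
    apply Finset.filter_congr
    intro u _
    show (v ≠ u ∧ ¬((v : ℕ) < k ∧ (u : ℕ) < k)) ↔ _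
    constructor
    · rintro ⟨h1, _⟩; exact h1.symm
    · intro h1; exact ⟨h1.symm, by omega⟩
  rw [heq, Finset.filter_ne', Finset.card_erase_of_mem (Finset.mem_univ v), Finset.card_univ,
    Fintype.card_fin]

lemma exGraph_minDegree (n k : ℕ) (hk0 : 0 < k) (hk : k < n) :
    (exGraph n k).minDegree = n - k := by
  have : Nonempty (Fin n) := ⟨⟨0, by omega⟩⟩
  apply le_antisymm
  · have h := SimpleGraph.minDegree_le_degree (exGraph n k) ⟨0, by omega⟩
    rwa [exGraph_degree_small n k ⟨0, by omega⟩ (by simpa)] at h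
  · apply SimpleGraph.le_minDegree_of_forall_le_degree
    intro v
    by_cases hv : (v : ℕ) < k
    · rw [exGraph_degree_small n k v hv]
    · rw [exGraph_degree_big n k v (by omega)]
      omega

def exColN {n : ℕ} (m k : ℕ) : Sym2 (Fin n) → ℕ :=
  Sym2.lift ⟨fun u v => min (min ((u : ℕ) / m) k) (min ((v : ℕ) / m) k),
    fun u v => by simp only []; rw [min_comm]⟩

lemma exColN_le {n : ℕ} (m k : ℕ) (e : Sym2 (Fin n)) : exColN m k e ≤ k := by
  induction e with
  | h a b => simp only [exColN, Sym2.lift_mk]; omega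

/-- The colouring: `min` of the block indices of the endpoints. -/
def exCol {n r : ℕ} (hr : 0 < r) (m : ℕ) (e : Sym2 (Fin n)) : Fin r :=
  ⟨exColN m (r - 1) e, by have := exColN_le m (r - 1) e; omega⟩

end Construction

theorem extremal_example_r_colours (r n : ℕ) (hr : 2 ≤ r) (hn : 0 < n) (hdvd : 2 * r ∣ n) :
    ∃ (G : SimpleGraph (Fin n)) (_ : DecidableRel G.Adj) (col : Sym2 (Fin n) → Fin r),
      (G.minDegree : ℝ) = ((1 : ℝ) / 2 + 1 / (2 * r)) * n ∧
      ∀ (v : Fin n) (C : G.Walk v v), C.IsHamiltonianCycle →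
        ∀ i : Fin r, colourCount col C.edges i = n / r := by
  classical
  obtain ⟨m, hm⟩ := hdvd
  have hm0 : 0 < m := by
    rcases Nat.eq_zero_or_pos m with rfl | h
    · simp at hm; omega
    · exact h
  obtain ⟨k, hkdef⟩ : ∃ k, r - 1 = k := ⟨r - 1, rfl⟩
  have hk0 : 0 < k := by omega
  have hkr : k + 1 = r := by omega
  have hkm0 : 0 < k * m := Nat.mul_pos hk0 hm0
  have hkmn : k * m < n := by
    rw [hm]
    have : k < 2 * r := by omega
    exact Nat.mul_lt_mul_of_lt_of_le this (le_refl m) hm0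
  have hr0 : 0 < r := by omega
  refine ⟨exGraph n (k * m), exGraphDec n (k * m), exCol hr0 m, ?_, ?_⟩
  · rw [exGraph_minDegree n (k * m) hkm0 hkmn]
    have h1 : n - k * m = (r + 1) * m := by
      rw [hm, show 2 * r = k + (r + 1) by omega, Nat.add_mul, Nat.add_sub_cancel_left]
    rw [h1]
    have hrR : (r : ℝ) ≠ 0 := by positivity
    rw [hm]
    push_cast
    field_simp
  · intro v C hC i
    have hnr : n / r = 2 * m := by
      rw [hm, show 2 * r * m = r * (2 * m) by ring, Nat.mul_div_cancel_left _ hr0]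
    have htwo : ∀ x : Fin n, C.edges.countP (fun e => decide (x ∈ e)) = 2 :=
      ham_two_count hC hn
    have hadj : ∀ e ∈ C.edges, e ∈ (exGraph n (k * m)).edgeSet := fun e he =>
      C.edges_subset_edgeSet he
    rw [hnr]
    by_cases hik : (i : ℕ) < k
    · -- colour i < k : edges incident to block i
      set T : Finset (Fin n) :=
        Finset.univ.filter fun w : Fin n => (i : ℕ) * m ≤ (w : ℕ) ∧ (w : ℕ) < ((i : ℕ) + 1) * m
        with hTdef
      have hTcard : T.card = m := by
        rw [hTdef, card_filter_Ico n _ _ ?_]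
        · rw [Nat.add_mul, one_mul, Nat.add_sub_cancel_left]
        · calc ((i : ℕ) + 1) * m ≤ k * m := Nat.mul_le_mul_right m (by omega)
            _ ≤ n := hkmn.le
      have hperedge : ∀ e ∈ C.edges,
          (if exCol hr0 m e = i then 1 else 0) = ∑ w ∈ T, (if w ∈ e then 1 else 0) := by
        intro e he
        induction e with
        | h a b =>
          have hadj2 := hadj _ he
          rw [SimpleGraph.mem_edgeSet] at hadj2
          obtain ⟨hab, hnot⟩ := hadj2
          have hsplit : ∀ w : Fin n, (if w ∈ s(a,b) then 1 else 0)
              = (if w = a then 1 else 0) + (if w = b then 1 else 0) := by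
            intro w
            by_cases h1 : w = a <;> by_cases h2 : w = b <;> simp_all [Sym2.mem_iff]
          rw [Finset.sum_congr rfl fun w _ => hsplit w, Finset.sum_add_distrib,
            Finset.sum_ite_eq' T a, Finset.sum_ite_eq' T b]
          have hmemA : a ∈ T ↔ ((i : ℕ) ≤ (a : ℕ) / m ∧ (a : ℕ) / m < (i : ℕ) + 1) := by
            rw [hTdef]
            simp only [Finset.mem_filter, Finset.mem_univ, true_and]
            rw [Nat.le_div_iff_mul_le hm0, Nat.div_lt_iff_lt_mul hm0]
          have hmemB : b ∈ T ↔ ((i : ℕ) ≤ (b : ℕ) / m ∧ (b : ℕ) / m < (i : ℕ) + 1) := by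
            rw [hTdef]
            simp only [Finset.mem_filter, Finset.mem_univ, true_and]
            rw [Nat.le_div_iff_mul_le hm0, Nat.div_lt_iff_lt_mul hm0]
          have hcoleq : (exCol hr0 m s(a,b) = i)
              ↔ (min (min ((a : ℕ) / m) k) (min ((b : ℕ) / m) k) = (i : ℕ)) := by
            rw [Fin.ext_iff]
            simp [exCol, exColN, hkdef]
          have hnot2 : ¬((a : ℕ) / m < k ∧ (b : ℕ) / m < k) := by
            rw [Nat.div_lt_iff_lt_mul hm0, Nat.div_lt_iff_lt_mul hm0]
            exact hnot
          simp only [hmemA, hmemB, hcoleq]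
          split_ifs <;> omega
      have hmach := count_machinery C.edges (fun e => exCol hr0 m e = i) T hperedge
        (fun w _ => htwo w)
      rw [hTcard] at hmach
      exact hmach
    · -- colour i = k (the last colour)
      have hik' : (i : ℕ) = k := by have := i.isLt; omega
      set T : Finset (Fin n) :=
        Finset.univ.filter fun w : Fin n => 0 ≤ (w : ℕ) ∧ (w : ℕ) < k * m with hTdef
      have hTcard : T.card = k * m := by
        rw [hTdef, card_filter_Ico n _ _ hkmn.le]
        omega
      have hperedge : ∀ e ∈ C.edges,
          (if ¬(exCol hr0 m e = i) then 1 else 0) = ∑ w ∈ T, (if w ∈ e then 1 else 0) := by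
        intro e he
        induction e with
        | h a b =>
          have hadj2 := hadj _ he
          rw [SimpleGraph.mem_edgeSet] at hadj2
          obtain ⟨hab, hnot⟩ := hadj2
          have hsplit : ∀ w : Fin n, (if w ∈ s(a,b) then 1 else 0)
              = (if w = a then 1 else 0) + (if w = b then 1 else 0) := by
            intro w
            by_cases h1 : w = a <;> by_cases h2 : w = b <;> simp_all [Sym2.mem_iff]
          rw [Finset.sum_congr rfl fun w _ => hsplit w, Finset.sum_add_distrib,
            Finset.sum_ite_eq' T a, Finset.sum_ite_eq' T b]
          have hmemA : a ∈ T ↔ (a : ℕ) / m < k := by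
            rw [hTdef]
            simp only [Finset.mem_filter, Finset.mem_univ, true_and, Nat.zero_le, true_and]
            rw [Nat.div_lt_iff_lt_mul hm0]
          have hmemB : b ∈ T ↔ (b : ℕ) / m < k := by
            rw [hTdef]
            simp only [Finset.mem_filter, Finset.mem_univ, true_and, Nat.zero_le, true_and]
            rw [Nat.div_lt_iff_lt_mul hm0]
          have hcoleq : (exCol hr0 m s(a,b) = i)
              ↔ (min (min ((a : ℕ) / m) k) (min ((b : ℕ) / m) k) = (i : ℕ)) := by
            rw [Fin.ext_iff]
            simp [exCol, exColN, hkdef]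
          have hnot2 : ¬((a : ℕ) / m < k ∧ (b : ℕ) / m < k) := by
            rw [Nat.div_lt_iff_lt_mul hm0, Nat.div_lt_iff_lt_mul hm0]
            exact hnot
          have hda : (a : ℕ) / m ≤ 2 * r := Nat.le_of_lt (by
            rw [Nat.div_lt_iff_lt_mul hm0]
            calc (a : ℕ) < n := a.isLt
              _ = 2 * r * m := hm
              _ ≤ 2 * r * m := le_refl _)
          simp only [hmemA, hmemB, hcoleq, hik']
          split_ifs <;> omega
      have hmach := count_machinery C.edges (fun e => ¬(exCol hr0 m e = i)) T hperedge
        (fun w _ => htwo w)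
      rw [hTcard] at hmach
      have hlen : C.edges.length = n := by
        rw [SimpleGraph.Walk.length_edges]
        simpa using hC.length_eq
      have htotal := List.length_eq_countP_add_countP
        (l := C.edges) (p := fun e => decide (exCol hr0 m e = i))
      rw [hlen] at htotal
      have hbridge : C.edges.countP (fun a => decide (¬decide (exCol hr0 m a = i) = true))
          = 2 * (k * m) := by
        rw [← hmach]
        apply List.countP_congr
        intro e _
        simp
      rw [hbridge] at htotal
      show C.edges.countP (fun e => decide (exCol hr0 m e = i)) = 2 * m
      have hneq : n = k * m + (k * m + 2 * m) := by
        rw [hm, show 2 * r = k + (k + 2) by omega, Nat.add_mul, Nat.add_mul]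
      omega
end

section
/- Let r ≥ 2 and n be positive integers such that 2r divides n. Let G be the n-vertex graph whose vertex set is partitioned into sets V_1, …, V_r with |V_1| = … = |V_{r-1}| = n/(2r) and |V_r| = (r+1)n/(2r), whose edge set consists of all pairs of vertices with at least one endpoint in V_r. Colour, for each i ∈ {1, …, r-1}, every edge with one endpoint in V_i and one endpoint in V_r with colour i, and colour every edge with both endpoints in V_r with colour r. Then the minimum degree of G equals (1/2 + 1/(2r))·n, and every Hamilton cycle in G contains precisely n/r edges of each colour i ∈ {1, …, r}. -/
open SimpleGraph Finset

private lemma ite_beq_flip {V : Type*} [DecidableEq V] (x y : V) :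
    (if x == y then 1 else 0 : ℕ) = if y = x then 1 else 0 := by
  simp only [beq_iff_eq]
  exact if_congr eq_comm rfl rfl

private lemma edges_countP_mem {V : Type*} [DecidableEq V] {G : SimpleGraph V}
    {u w : V} (p : G.Walk u w) (v : V) :
    p.edges.countP (fun e => v ∈ e) =
      p.support.dropLast.count v + p.support.tail.count v := by
  induction p with
  | nil => simp
  | @cons a b c h q ih =>
    have hne : q.support ≠ [] := q.support_ne_nil
    rw [Walk.edges_cons, Walk.support_cons, List.countP_cons, ih,
      List.dropLast_cons_of_ne_nil hne, List.tail_cons, List.count_cons, ite_beq_flip]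
    have hq : q.support.count v = q.support.tail.count v + (if v = b then 1 else 0) := by
      conv_lhs => rw [q.support_eq_cons]
      rw [List.count_cons, ite_beq_flip]
    rw [hq]
    by_cases hva : v = a <;> by_cases hvb : v = b
    · exact absurd (hva.symm.trans hvb) h.ne
    all_goals simp [Sym2.mem_iff, hva, hvb, h.ne, h.ne.symm]
    all_goals omega

private lemma hamCycle_countP_mem {V : Type*} [DecidableEq V] {G : SimpleGraph V} {a : V}
    {C : G.Walk a a} (hC : C.IsHamiltonianCycle) (v : V) :
    C.edges.countP (fun e => v ∈ e) = 2 := by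
  rw [edges_countP_mem]
  have htail : C.support.tail.count v = 1 := by
    have h := hC.isHamiltonian_tail v
    rwa [Walk.support_tail_of_not_nil _ hC.1.not_nil] at h
  have hsplit : C.support = C.support.dropLast ++ [a] := by
    conv_lhs => rw [← List.dropLast_append_getLast C.support_ne_nil]
    rw [C.getLast_support]
  have hcount : C.support.count v =
      C.support.dropLast.count v + (if v = a then 1 else 0) := by
    conv_lhs => rw [hsplit]
    rw [List.count_append]
    congr 1
    rw [List.count_singleton']
    exact if_congr eq_comm rfl rfl
  by_cases hva : v = a
  · have h2 := hC.count_support_self (a := a)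
    subst hva
    simp at hcount
    omega
  · have h1 : C.support.count v = 1 := hC.support_count_of_ne (Ne.symm hva)
    simp [hva] at hcount
    omega

private lemma countP_eq_sum_countP {α β : Type*} (s : Finset β) (p : α → Prop) [DecidablePred p]
    (q : β → α → Prop) [∀ v, DecidablePred (q v)] :
    ∀ (l : List α), (∀ e ∈ l, (s.filter (fun v => q v e)).card = if p e then 1 else 0) →
      l.countP (fun e => p e) = ∑ v ∈ s, l.countP (fun e => q v e) := by
  intro l
  induction l with
  | nil => simp
  | cons a l ih =>
    intro hl
    have h1 := hl a (by simp)
    rw [List.countP_cons, ih (fun e he => hl e (List.mem_cons_of_mem _ he))]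
    simp only [List.countP_cons]
    rw [Finset.sum_add_distrib]
    have h2 : ∑ v ∈ s, (if q v a then 1 else 0) = (if p a then 1 else 0) := by
      rw [← h1, Finset.card_filter]
    simp only [decide_eq_true_eq] at *
    omega

private lemma length_eq_sum_countP {α : Type*} {r : ℕ} (col : α → Fin r) (l : List α) :
    ∑ c : Fin r, l.countP (fun e => col e = c) = l.length := by
  induction l with
  | nil => simp
  | cons a l ih =>
    simp only [List.countP_cons, decide_eq_true_eq, List.length_cons]
    rw [Finset.sum_add_distrib, ih, Finset.sum_ite_eq (Finset.univ) (col a) (fun _ => 1)]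
    simp

/-- the explicit extremal construction. The classes `V_1, …, V_r` are the fibres of
`P : Fin n → Fin r`, where `top` (the element of `Fin r` with value `r - 1`) plays the role of the
index `r`; the colour associated to an edge meeting class `i ≠ top` is `i`, and edges inside the
top class get colour `top`. -/
theorem extremal_construction (r n : ℕ) (hr : 2 ≤ r) (hn : 0 < n) (hdvd : 2 * r ∣ n)
    (P : Fin n → Fin r) (top : Fin r) (htop : (top : ℕ) = r - 1)
    (hsmall : ∀ i : Fin r, i ≠ top →
      (Finset.univ.filter (fun v => P v = i)).card = n / (2 * r))
    (hbig : (Finset.univ.filter (fun v => P v = top)).card = (r + 1) * n / (2 * r))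
    (G : SimpleGraph (Fin n)) [DecidableRel G.Adj]
    (hG : ∀ x y : Fin n, G.Adj x y ↔ x ≠ y ∧ (P x = top ∨ P y = top))
    (col : Sym2 (Fin n) → Fin r)
    (hcol : ∀ x y : Fin n, G.Adj x y →
      (P x ≠ top → col s(x, y) = P x) ∧ (P y ≠ top → col s(x, y) = P y) ∧
      (P x = top → P y = top → col s(x, y) = top)) :
    (G.minDegree : ℝ) = ((1 : ℝ) / 2 + 1 / (2 * r)) * n ∧
      ∀ (v : Fin n) (C : G.Walk v v), C.IsHamiltonianCycle →
        ∀ i : Fin r, colourCount col C.edges i = n / r := by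
  obtain ⟨k, hk⟩ := hdvd
  have hr0 : 0 < r := by omega
  have hk0 : 0 < k := by
    rcases Nat.eq_zero_or_pos k with h | h
    · simp [h] at hk; omega
    · exact h
  have hn2r : n / (2 * r) = k := by rw [hk, Nat.mul_div_cancel_left _ (by omega)]
  have hnr : n / r = 2 * k := by
    rw [hk, show 2 * r * k = r * (2 * k) by ring, Nat.mul_div_cancel_left _ hr0]
  have hbig' : (Finset.univ.filter (fun v => P v = top)).card = (r + 1) * k := by
    rw [hbig, hk, show (r + 1) * (2 * r * k) = (2 * r) * ((r + 1) * k) by ring,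
      Nat.mul_div_cancel_left _ (by omega : 0 < 2 * r)]
  haveI : Nonempty (Fin n) := ⟨⟨0, hn⟩⟩
  -- degrees
  have hdeg_top : ∀ v : Fin n, P v = top → G.degree v = n - 1 := by
    intro v hv
    rw [SimpleGraph.degree, neighborFinset_eq_filter]
    have : ({w | G.Adj v w} : Finset (Fin n)) = Finset.univ.filter (fun w => w ≠ v) := by
      ext w
      simp only [Finset.mem_filter, Finset.mem_univ, true_and]
      rw [hG]
      constructor
      · rintro ⟨h1, _⟩; exact Ne.symm h1
      · intro h1; exact ⟨Ne.symm h1, Or.inl hv⟩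
    rw [this, Finset.filter_ne', Finset.card_erase_of_mem (Finset.mem_univ v),
      Finset.card_univ, Fintype.card_fin]
  have hdeg_small : ∀ v : Fin n, P v ≠ top → G.degree v = (r + 1) * k := by
    intro v hv
    rw [SimpleGraph.degree, neighborFinset_eq_filter, ← hbig']
    congr 1
    ext w
    simp only [Finset.mem_filter, Finset.mem_univ, true_and]
    rw [hG]
    constructor
    · rintro ⟨h1, h2 | h2⟩
      · exact absurd h2 hv
      · exact h2
    · intro h1
      refine ⟨fun h => hv (h ▸ h1), Or.inr h1⟩
  -- min degree
  have hBle : (r + 1) * k ≤ n - 1 := by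
    have h1 : 1 * 1 ≤ (r - 1) * k := Nat.mul_le_mul (by omega) hk0
    have h2 : (r + 1) * k + (r - 1) * k = 2 * r * k := by
      have : (r + 1) + (r - 1) = 2 * r := by omega
      rw [← Nat.add_mul, this]
    omega
  have hmin : G.minDegree = (r + 1) * k := by
    -- there is a vertex not in the top class
    obtain ⟨i, hi⟩ : ∃ i : Fin r, i ≠ top := by
      haveI : Nontrivial (Fin r) := Fin.nontrivial_iff_two_le.mpr hr
      exact exists_ne top
    have hcard : 0 < (Finset.univ.filter (fun v => P v = i)).card := by
      rw [hsmall i hi, hn2r]; exact hk0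
    obtain ⟨v0, hv0⟩ := Finset.card_pos.mp hcard
    rw [Finset.mem_filter] at hv0
    refine le_antisymm ?_ ?_
    · calc G.minDegree ≤ G.degree v0 := G.minDegree_le_degree v0
        _ = (r + 1) * k := hdeg_small v0 (hv0.2 ▸ hi)
    · refine SimpleGraph.le_minDegree_of_forall_le_degree G _ (fun v => ?_)
      by_cases hv : P v = top
      · rw [hdeg_top v hv]; exact hBle
      · rw [hdeg_small v hv]
  constructor
  · rw [hmin]
    have hnR : (n : ℝ) = 2 * r * k := by exact_mod_cast congrArg (Nat.cast : ℕ → ℝ) hk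
    have hrR : (r : ℝ) ≠ 0 := Nat.cast_ne_zero.mpr (by omega)
    rw [hnR]
    push_cast
    field_simp
  · intro v C hC i
    unfold colourCount
    have hedge : ∀ e ∈ C.edges, e ∈ G.edgeSet := fun e he => C.edges_subset_edgeSet he
    -- count for non-top colours
    have hcount_small : ∀ j : Fin r, j ≠ top →
        C.edges.countP (fun e => col e = j) = 2 * k := by
      intro j hj
      have key : ∀ e ∈ C.edges,
          ((Finset.univ.filter (fun v => P v = j)).filter (fun v => v ∈ e)).card
            = if col e = j then 1 else 0 := by
        intro e he
        have heG := hedge e he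
        induction e with
        | h x y =>
          rw [SimpleGraph.mem_edgeSet] at heG
          obtain ⟨hcx, hcy, hct⟩ := hcol x y heG
          have hPxy : P x = top ∨ P y = top := ((hG x y).mp heG).2
          by_cases hx : P x = top <;> by_cases hy : P y = top
          · rw [if_neg (by rw [hct hx hy]; exact fun h => hj h.symm)]
            rw [Finset.card_eq_zero, Finset.eq_empty_iff_forall_notMem]
            intro z hz
            simp only [Finset.mem_filter, Finset.mem_univ, true_and, Sym2.mem_iff] at hz
            obtain ⟨hPz, hz2 | hz2⟩ := hz <;> subst hz2
            · exact hj (hPz.symm.trans hx)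
            · exact hj (hPz.symm.trans hy)
          · have hcxy : col s(x, y) = P y := hcy hy
            by_cases hPyj : P y = j
            · rw [if_pos (by rw [hcxy, hPyj])]
              rw [Finset.card_eq_one]
              refine ⟨y, ?_⟩
              ext z
              simp only [Finset.mem_filter, Finset.mem_univ, true_and, Sym2.mem_iff,
                Finset.mem_singleton]
              constructor
              · rintro ⟨hPz, hz | hz⟩
                · subst hz; exact absurd (hPz.symm.trans hx) hj
                · exact hz
              · rintro rfl; exact ⟨hPyj, Or.inr rfl⟩
            · rw [if_neg (by rw [hcxy]; exact hPyj)]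
              rw [Finset.card_eq_zero, Finset.eq_empty_iff_forall_notMem]
              intro z hz
              simp only [Finset.mem_filter, Finset.mem_univ, true_and, Sym2.mem_iff] at hz
              obtain ⟨hPz, hz | hz⟩ := hz <;> subst hz
              · exact hj (hPz.symm.trans hx)
              · exact hPyj hPz
          · have hcxy : col s(x, y) = P x := hcx hx
            by_cases hPxj : P x = j
            · rw [if_pos (by rw [hcxy, hPxj])]
              rw [Finset.card_eq_one]
              refine ⟨x, ?_⟩
              ext z
              simp only [Finset.mem_filter, Finset.mem_univ, true_and, Sym2.mem_iff,
                Finset.mem_singleton]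
              constructor
              · rintro ⟨hPz, hz | hz⟩
                · exact hz
                · subst hz; exact absurd (hPz.symm.trans hy) hj
              · rintro rfl; exact ⟨hPxj, Or.inl rfl⟩
            · rw [if_neg (by rw [hcxy]; exact hPxj)]
              rw [Finset.card_eq_zero, Finset.eq_empty_iff_forall_notMem]
              intro z hz
              simp only [Finset.mem_filter, Finset.mem_univ, true_and, Sym2.mem_iff] at hz
              obtain ⟨hPz, hz | hz⟩ := hz <;> subst hz
              · exact hPxj hPz
              · exact hj (hPz.symm.trans hy)
          · rcases hPxy with h | h
            · exact absurd h hx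
            · exact absurd h hy
      rw [countP_eq_sum_countP _ _ _ C.edges key]
      have : ∀ w ∈ Finset.univ.filter (fun v => P v = j),
          C.edges.countP (fun e => w ∈ e) = 2 := fun w _ => hamCycle_countP_mem hC w
      rw [Finset.sum_congr rfl this, Finset.sum_const, smul_eq_mul, hsmall j hj, hn2r]
      ring
    by_cases hi : i = top
    · subst hi
      have hlen : C.edges.length = n := by
        rw [C.length_edges, hC.length_eq, Fintype.card_fin]
      have hsum := length_eq_sum_countP col C.edges
      rw [hlen] at hsum
      rw [← Finset.sum_erase_add _ _ (Finset.mem_univ i)] at hsum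
      have herase : ∀ c ∈ Finset.univ.erase i,
          C.edges.countP (fun e => col e = c) = 2 * k := by
        intro c hc
        exact hcount_small c (Finset.ne_of_mem_erase hc)
      rw [Finset.sum_congr rfl herase, Finset.sum_const, smul_eq_mul,
        Finset.card_erase_of_mem (Finset.mem_univ i), Finset.card_univ,
        Fintype.card_fin] at hsum
      have hrw : (r - 1) * (2 * k) + 2 * k = n := by
        rw [hk]
        have : (r - 1) + 1 = r := by omega
        calc (r - 1) * (2 * k) + 2 * k = ((r - 1) + 1) * (2 * k) := by ring
          _ = r * (2 * k) := by rw [this]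
          _ = 2 * r * k := by ring
      rw [hnr]
      omega
    · rw [hnr]
      exact hcount_small i hi
end

section
/- Let n be a positive integer divisible by 3. Then there exists a graph G on n vertices with minimum degree δ(G) = 2n/3, and a 3-colouring of the edges of G, such that every Hamilton cycle in G uses precisely n/3 edges of each of the three colours, and every vertex of G is incident to edges of precisely two of the three colours. -/
private lemma countP_range_mod (m r : ℕ) (hr : r < 3) :
    (List.range (3 * m)).countP (fun x => decide (x % 3 = r)) = m := by
  induction m with
  | zero => simp
  | succ k ih =>
    have h : 3 * (k + 1) = (3 * k + 1) + 1 + 1 := by ring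
    rw [h, List.range_succ, List.range_succ, List.range_succ, List.countP_append,
      List.countP_append, List.countP_append, ih]
    simp only [List.countP_singleton, decide_eq_true_eq]
    have h0 : (3 * k) % 3 = 0 := by omega
    split_ifs <;> omega

private lemma countP_finRange_mod (n r : ℕ) (hr : r < 3) (h3 : 3 ∣ n) :
    (List.finRange n).countP (fun v => decide (v.val % 3 = r)) = n / 3 := by
  have h2 : (List.range n).countP (fun x => decide (x % 3 = r))
      = (List.finRange n).countP (fun v => decide (v.val % 3 = r)) := by
    rw [← (List.ext_getElem (by simp) (by simp) :
      (List.finRange n).map (fun v : Fin n => v.val) = List.range n), List.countP_map]; rfl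
  obtain ⟨m, rfl⟩ := h3
  rw [← h2, countP_range_mod m r hr]
  omega

private lemma card_filter_mod (n r : ℕ) (hr : r < 3) (h3 : 3 ∣ n) :
    ((Finset.univ : Finset (Fin n)).filter (fun w => w.val % 3 = r)).card = n / 3 := by
  rw [Fin.univ_def]
  show Multiset.card (Multiset.filter _ (↑(List.finRange n) : Multiset (Fin n))) = n / 3
  rw [Multiset.filter_coe, Multiset.coe_card, ← List.countP_eq_length_filter]
  exact countP_finRange_mod n r hr h3

private lemma countP_three {α : Type*} (P Q R : α → Bool) :
    ∀ L : List α, (∀ x ∈ L,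
      (if P x then 1 else 0) + (if Q x then 1 else 0) + (if R x then 1 else 0) = 1) →
      L.countP P + L.countP Q + L.countP R = L.length := by
  intro L
  induction L with
  | nil => simp
  | cons a l ih =>
    intro h
    have ha := h a (by simp)
    have hl := ih (fun x hx => h x (by simp [hx]))
    simp only [List.countP_cons, List.length_cons]
    split_ifs at ha ⊢ <;> omega

private lemma dropLast_perm_tail {α : Type*} (v : α) (t : List α)
    (h : (v :: t).getLast? = some v) : (v :: t).dropLast.Perm (v :: t).tail := by
  cases t with
  | nil => simp
  | cons b s =>
    have ht : (b :: s) ≠ [] := by simp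
    have h1 : (b :: s).getLast ht = v := by
      have h0 := List.getLast?_eq_getLast_of_ne_nil (l := v :: b :: s) (by simp)
      rw [h] at h0
      have h0' : (v :: b :: s).getLast (by simp) = v := (Option.some.inj h0).symm
      rw [← h0']
      exact (List.getLast_cons ht).symm
    have h2 : b :: s = (b :: s).dropLast ++ [v] := by
      conv_lhs => rw [← List.dropLast_append_getLast ht]
      rw [h1]
    simp only [List.tail_cons]
    rw [List.dropLast_cons_of_ne_nil ht]
    have h4 : (v :: (b :: s).dropLast).Perm ((b :: s).dropLast ++ [v]) :=
      List.perm_append_comm (l₁ := [v])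
    rw [← h2] at h4
    exact h4

theorem extremal_example_three_colours (n : ℕ) (hn : 0 < n) (h3 : 3 ∣ n) :
    ∃ (G : SimpleGraph (Fin n)) (_ : DecidableRel G.Adj) (col : Sym2 (Fin n) → Fin 3),
      G.minDegree = 2 * n / 3 ∧
      (∀ (v : Fin n) (C : G.Walk v v), C.IsHamiltonianCycle →
        ∀ i : Fin 3, colourCount col C.edges i = n / 3) ∧
      (∀ v : Fin n,
        (Finset.univ.filter
          (fun i : Fin 3 => ∃ w : Fin n, G.Adj v w ∧ col s(v, w) = i)).card = 2) := by
  have hn3 : 3 ≤ n := by omega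
  let G : SimpleGraph (Fin n) :=
    { Adj := fun v w => v.val % 3 ≠ w.val % 3
      symm := ⟨fun v w h => Ne.symm h⟩
      loopless := ⟨fun v h => h rfl⟩ }
  have hadj : ∀ v w : Fin n, G.Adj v w ↔ v.val % 3 ≠ w.val % 3 := fun v w => Iff.rfl
  let dec : DecidableRel G.Adj := fun v w =>
    inferInstanceAs (Decidable (v.val % 3 ≠ w.val % 3))
  let col : Sym2 (Fin n) → Fin 3 := Sym2.lift
    ⟨fun v w => ⟨(v.val % 3 + w.val % 3) % 3, by omega⟩,
     fun v w => by apply Fin.ext; simp [Nat.add_comm]⟩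
  have hcol : ∀ v w : Fin n, (col s(v, w)).val = (v.val % 3 + w.val % 3) % 3 :=
    fun v w => rfl
  refine ⟨G, dec, col, ?_, ?_, ?_⟩
  · -- minimum degree
    have hdeg : ∀ v : Fin n, G.degree v = 2 * n / 3 := by
      intro v
      have hv : v.val % 3 < 3 := by omega
      rw [← SimpleGraph.card_neighborFinset_eq_degree, SimpleGraph.neighborFinset_eq_filter]
      have hsplit := Finset.card_filter_add_card_filter_not
        (s := (Finset.univ : Finset (Fin n))) (p := fun w => G.Adj v w)
      have h1 : (Finset.univ.filter (fun w : Fin n => ¬ G.Adj v w)).card = n / 3 := by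
        have he : Finset.univ.filter (fun w : Fin n => ¬ G.Adj v w)
            = Finset.univ.filter (fun w : Fin n => w.val % 3 = v.val % 3) := by
          apply Finset.filter_congr
          intro w _
          rw [hadj]
          constructor
          · intro hw; omega
          · intro hw; omega
        rw [he, card_filter_mod n _ hv h3]
      rw [Finset.card_univ, Fintype.card_fin] at hsplit
      omega
    haveI : Nonempty (Fin n) := ⟨⟨0, hn⟩⟩
    apply le_antisymm
    · exact (SimpleGraph.minDegree_le_degree G ⟨0, hn⟩).trans_eq (hdeg _)
    · exact SimpleGraph.le_minDegree_of_forall_le_degree G _ (fun v => (hdeg v).ge)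
  · -- Hamilton cycles
    intro v C hC i
    have hi : i.val < 3 := i.isLt
    set p := (3 - i.val) % 3 with hp
    have hp3 : p < 3 := by omega
    have hnil := hC.isCycle.not_nil
    have hT : ∀ x : Fin n, C.support.tail.count x = 1 := by
      intro x
      have hx := hC.isHamiltonian_tail x
      rwa [SimpleGraph.Walk.support_tail_of_not_nil C hnil] at hx
    have hperm : C.support.tail.Perm (List.finRange n) := by
      rw [List.perm_iff_count]
      intro x
      rw [hT x, List.count_eq_one_of_mem (List.nodup_finRange n) (List.mem_finRange x)]
    have hsnd : C.darts.map (fun d => d.snd) = C.support.tail :=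
      SimpleGraph.Walk.map_snd_darts C
    have hfst : C.darts.map (fun d => d.fst) = C.support.dropLast :=
      SimpleGraph.Walk.map_fst_darts C
    have hdl : C.support.dropLast.Perm C.support.tail := by
      have hc : C.support = v :: C.support.tail := C.support_eq_cons
      have hl : (v :: C.support.tail).getLast? = some v := by
        rw [← hc, List.getLast?_eq_getLast_of_ne_nil (l := C.support) (by simp),
          C.getLast_support]
      have hperm2 := dropLast_perm_tail v C.support.tail hl
      rw [hc]
      exact hperm2
    have hlen : C.darts.length = n := by
      have hlm := congrArg List.length hsnd
      rw [List.length_map] at hlm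
      rw [hlm, hperm.length_eq, List.length_finRange]
    have hS : C.darts.countP (fun d => decide (d.snd.val % 3 = p)) = n / 3 := by
      have step : C.darts.countP (fun d => decide (d.snd.val % 3 = p))
          = C.support.tail.countP (fun x => decide (x.val % 3 = p)) := by
        rw [← hsnd, List.countP_map]; rfl
      rw [step, hperm.countP_eq, countP_finRange_mod n p hp3 h3]
    have hF : C.darts.countP (fun d => decide (d.fst.val % 3 = p)) = n / 3 := by
      have step : C.darts.countP (fun d => decide (d.fst.val % 3 = p))
          = C.support.dropLast.countP (fun x => decide (x.val % 3 = p)) := by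
        rw [← hfst, List.countP_map]; rfl
      rw [step, hdl.countP_eq, hperm.countP_eq, countP_finRange_mod n p hp3 h3]
    have key := countP_three
      (fun d : G.Dart => decide (col d.edge = i))
      (fun d : G.Dart => decide (d.fst.val % 3 = p))
      (fun d : G.Dart => decide (d.snd.val % 3 = p))
      C.darts ?_
    · have hedges : colourCount col C.edges i
          = C.darts.countP (fun d => decide (col d.edge = i)) := by
        unfold colourCount
        rw [show C.edges = C.darts.map SimpleGraph.Dart.edge from rfl, List.countP_map]
        rfl
      rw [hedges]
      omega
    · intro d _
      have hadjd : d.fst.val % 3 ≠ d.snd.val % 3 := d.adj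
      have ha : d.fst.val % 3 < 3 := by omega
      have hb : d.snd.val % 3 < 3 := by omega
      have hcd : (col d.edge).val = (d.fst.val % 3 + d.snd.val % 3) % 3 := hcol d.fst d.snd
      have hiff : (col d.edge = i) ↔ ((d.fst.val % 3 + d.snd.val % 3) % 3 = i.val) := by
        rw [Fin.ext_iff, hcd]
      simp only [decide_eq_true_eq, hiff]
      split_ifs <;> omega
  · -- two colours at each vertex
    intro v
    have hv3 : v.val % 3 < 3 := by omega
    have hset : Finset.univ.filter (fun i : Fin 3 => ∃ w, G.Adj v w ∧ col s(v, w) = i)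
        = Finset.univ.filter (fun i : Fin 3 => i.val ≠ (v.val % 3 * 2) % 3) := by
      apply Finset.filter_congr
      intro i _
      constructor
      · rintro ⟨w, hw, hcw⟩
        have h1 : v.val % 3 ≠ w.val % 3 := hw
        have h2 : i.val = (v.val % 3 + w.val % 3) % 3 := by rw [← hcw, hcol]
        have hw3 : w.val % 3 < 3 := by omega
        omega
      · intro hi
        have hin : i.val < 3 := i.isLt
        refine ⟨⟨(i.val + 3 - v.val % 3) % 3, by omega⟩, ?_, ?_⟩
        · show v.val % 3 ≠ ((i.val + 3 - v.val % 3) % 3) % 3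
          omega
        · apply Fin.ext
          rw [hcol]
          simp only [Fin.val_mk]
          omega
    rw [hset]
    rcases (by omega : v.val % 3 = 0 ∨ v.val % 3 = 1 ∨ v.val % 3 = 2) with h | h | h <;>
      rw [h] <;> decide
end

section
/- Let n, r, d be positive integers with r ≥ 2. Let G be an n-vertex graph with δ(G) ≥ (1/2 + 1/(2r))·n + 6dr², equipped with an r-colouring of its edges, and let C be a Hamilton cycle in G that is not d-unbalanced (i.e., every colour appears on fewer than n/r + d edges of C). Let v be a vertex of G, let Y be a set of vertices of G with |Y| ≤ 5dr², and let xy be an edge of G that forms a triangle with v (i.e., vx, vy ∈ E(G)) and whose endpoints x, y do not lie in Y ∪ {v}. Then there exists an edge zw of C, vertex-disjoint from xy, with z, w ∉ Y ∪ {v}, such that vz and vw are edges of G and the colour of zw is different from the colour of xy. -/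
private lemma countP_or_le {α : Type*} (p q : α → Bool) (l : List α) :
    l.countP (fun a => p a || q a) ≤ l.countP p + l.countP q := by
  induction l with
  | nil => simp
  | cons a l ih =>
    simp only [List.countP_cons]
    cases hp : p a <;> cases hq : q a <;> simp [hp, hq] <;> omega

private lemma countP_exists_le {α β : Type*} [DecidableEq β] (F : Finset β)
    (m : β → α → Prop) [∀ b a, Decidable (m b a)] (l : List α) :
    l.countP (fun a => decide (∃ b ∈ F, m b a)) ≤
      ∑ b ∈ F, l.countP (fun a => decide (m b a)) := by
  classical
  induction F using Finset.induction_on with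
  | empty => simp
  | @insert c F hc ih =>
    rw [Finset.sum_insert hc]
    calc l.countP (fun a => decide (∃ b ∈ insert c F, m b a))
        ≤ l.countP (fun a => decide (m c a) || decide (∃ b ∈ F, m b a)) := by
          apply List.countP_mono_left
          intro a _ h
          simp only [decide_eq_true_eq, Finset.mem_insert] at h
          simp only [Bool.or_eq_true, decide_eq_true_eq]
          obtain ⟨b, hb | hb, hm⟩ := h
          · exact Or.inl (hb ▸ hm)
          · exact Or.inr ⟨b, hb, hm⟩
      _ ≤ l.countP (fun a => decide (m c a)) + l.countP (fun a => decide (∃ b ∈ F, m b a)) :=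
          countP_or_le _ _ l
      _ ≤ _ := Nat.add_le_add_left ih _

private lemma countP_eq_count' {α : Type*} [DecidableEq α] (w : α) (l : List α) :
    l.countP (fun z => decide (w = z)) = l.count w := by
  induction l with
  | nil => simp
  | cons a l ih =>
    rw [List.countP_cons, List.count_cons, ih]
    rcases eq_or_ne w a with rfl | h
    · simp
    · simp [h, Ne.symm h]

private lemma vertex_countP_edges_le_two {n : ℕ} {G : SimpleGraph (Fin n)} {u : Fin n}
    {C : G.Walk u u} (hC : C.IsHamiltonianCycle) (w : Fin n) :
    C.edges.countP (fun e => decide (w ∈ e)) ≤ 2 := by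
  have htail : C.support.tail.count w = 1 :=
    (SimpleGraph.Walk.isHamiltonianCycle_iff_isCycle_and_support_count_tail_eq_one.mp hC).2 w
  have hdrop : C.support.dropLast.count w ≤ 1 := by
    have h1 : C.support.dropLast ++ [u] = C.support := by
      have := List.dropLast_concat_getLast (l := C.support) (C.support_ne_nil)
      rwa [SimpleGraph.Walk.getLast_support] at this
    have h2 : C.support = u :: C.support.tail := C.support_eq_cons
    have h3 := congrArg (List.count w) h1
    rw [List.count_append] at h3
    have h4 : List.count w [u] = if u = w then 1 else 0 := by
      simp [List.count_cons]
    have h5 : List.count w C.support = 1 + if u = w then 1 else 0 := by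
      rw [h2, List.count_cons, htail]
      simp
    rw [h4, h5] at h3
    split_ifs at h3 <;> omega
  have hedges : C.edges = C.darts.map SimpleGraph.Dart.edge := rfl
  rw [hedges, List.countP_map]
  calc C.darts.countP ((fun e => decide (w ∈ e)) ∘ SimpleGraph.Dart.edge)
      ≤ C.darts.countP (fun d => decide (w = d.fst) || decide (w = d.snd)) := by
        apply List.countP_mono_left
        intro d _ h
        simp only [Function.comp_apply, decide_eq_true_eq] at h
        have hd : d.edge = s(d.fst, d.snd) := rfl
        rw [hd, Sym2.mem_iff] at h
        simp only [Bool.or_eq_true, decide_eq_true_eq]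
        exact h
    _ ≤ C.darts.countP (fun d => decide (w = d.fst)) +
          C.darts.countP (fun d => decide (w = d.snd)) := countP_or_le _ _ _
    _ ≤ 2 := by
        have hf : C.darts.countP (fun d => decide (w = d.fst)) ≤ 1 := by
          rw [show (fun d : G.Dart => decide (w = d.fst)) =
              ((fun z => decide (w = z)) ∘ (fun d : G.Dart => d.fst)) from rfl,
            ← List.countP_map, countP_eq_count', SimpleGraph.Walk.map_fst_darts]
          exact hdrop
        have hs : C.darts.countP (fun d => decide (w = d.snd)) ≤ 1 := by
          rw [show (fun d : G.Dart => decide (w = d.snd)) =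
              ((fun z => decide (w = z)) ∘ (fun d : G.Dart => d.snd)) from rfl,
            ← List.countP_map, countP_eq_count', SimpleGraph.Walk.map_snd_darts]
          omega
        omega

theorem switching_edge_exists (n r d : ℕ) (hn : 0 < n) (hr : 2 ≤ r) (hd : 0 < d)
    (G : SimpleGraph (Fin n)) [DecidableRel G.Adj]
    (hδ : ((1 : ℝ) / 2 + 1 / (2 * r)) * n + 6 * d * r ^ 2 ≤ G.minDegree)
    (col : Sym2 (Fin n) → Fin r)
    (u : Fin n) (C : G.Walk u u) (hC : C.IsHamiltonianCycle)
    (hunbal : ∀ c : Fin r, (colourCount col C.edges c : ℝ) < (n : ℝ) / r + d)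
    (v : Fin n) (Y : Finset (Fin n)) (hY : Y.card ≤ 5 * d * r ^ 2)
    (x y : Fin n) (hxy : G.Adj x y) (hvx : G.Adj v x) (hvy : G.Adj v y)
    (hxY : x ∉ Y) (hxv : x ≠ v) (hyY : y ∉ Y) (hyv : y ≠ v) :
    ∃ z w : Fin n, s(z, w) ∈ C.edges ∧
      z ≠ x ∧ z ≠ y ∧ w ≠ x ∧ w ≠ y ∧
      z ∉ Y ∧ z ≠ v ∧ w ∉ Y ∧ w ≠ v ∧
      G.Adj v z ∧ G.Adj v w ∧
      col s(z, w) ≠ col s(x, y) := by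
  classical
  set F : Finset (Fin n) :=
    (Finset.univ.filter (fun w => ¬ G.Adj v w)) ∪ Y ∪ {x, y} with hF
  -- cardinality bound for F
  have hdegn : G.degree v ≤ n := by
    calc G.degree v = (G.neighborFinset v).card := rfl
      _ ≤ (Finset.univ : Finset (Fin n)).card := Finset.card_le_card (Finset.subset_univ _)
      _ = n := by simp
  have hfilter : (Finset.univ.filter (fun w => ¬ G.Adj v w)).card = n - G.degree v := by
    have h := Finset.card_filter_add_card_filter_not
      (s := (Finset.univ : Finset (Fin n))) (p := fun w => G.Adj v w)
    have hdeg : (Finset.univ.filter (fun w => G.Adj v w)).card = G.degree v := by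
      rw [SimpleGraph.degree, SimpleGraph.neighborFinset_eq_filter]
    simp only [Finset.card_univ, Fintype.card_fin] at h
    omega
  have hFcard : F.card ≤ (n - G.degree v) + Y.card + 2 := by
    calc F.card ≤ ((Finset.univ.filter (fun w => ¬ G.Adj v w)) ∪ Y).card + ({x, y} : Finset (Fin n)).card :=
          Finset.card_union_le _ _
      _ ≤ (Finset.univ.filter (fun w => ¬ G.Adj v w)).card + Y.card + ({x, y} : Finset (Fin n)).card := by
          have := Finset.card_union_le (Finset.univ.filter (fun w => ¬ G.Adj v w)) Y
          omega
      _ ≤ (n - G.degree v) + Y.card + 2 := by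
          have h2 : ({x, y} : Finset (Fin n)).card ≤ 2 := Finset.card_insert_le _ _ |>.trans (by simp)
          omega
  -- list of edges
  set L := C.edges with hL
  have hlen : L.length = n := by
    rw [hL, SimpleGraph.Walk.length_edges, hC.length_eq, Fintype.card_fin]
  set t : Fin r := col s(x, y) with ht
  -- bad edge count
  have hbad : L.countP (fun e => decide (∃ w ∈ F, w ∈ e)) ≤ 2 * F.card := by
    calc L.countP (fun e => decide (∃ w ∈ F, w ∈ e))
        ≤ ∑ w ∈ F, L.countP (fun e => decide (w ∈ e)) := by convert countP_exists_le F (fun w e => w ∈ e) L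
      _ ≤ ∑ _w ∈ F, 2 := Finset.sum_le_sum (fun w _ => vertex_countP_edges_le_two hC w)
      _ = 2 * F.card := by rw [Finset.sum_const]; ring
  -- the good predicate
  set P : Sym2 (Fin n) → Bool :=
    fun e => !(decide (∃ w ∈ F, w ∈ e)) && !(decide (col e = t)) with hP
  have hsplit : L.length ≤ L.countP P + (L.countP (fun e => decide (∃ w ∈ F, w ∈ e))
      + L.countP (fun e => decide (col e = t))) := by
    have h1 := List.length_eq_countP_add_countP (p := P) (l := L)
    have h2 : L.countP (fun a => decide ¬(P a = true)) ≤
        L.countP (fun e => decide (∃ w ∈ F, w ∈ e))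
        + L.countP (fun e => decide (col e = t)) := by
      refine le_trans (List.countP_mono_left (q := fun e =>
        decide (∃ w ∈ F, w ∈ e) || decide (col e = t)) ?_) (countP_or_le _ _ _)
      intro e _ h
      simp only [decide_eq_true_eq] at h
      by_cases hA : ∃ w ∈ F, w ∈ e
      · simp [hA]
      · by_cases hB : col e = t
        · simp [hB]
        · exfalso; apply h; rw [hP]; simp [hA, hB]
    calc L.length = L.countP P + L.countP (fun a => decide ¬(P a = true)) := h1
      _ ≤ _ := Nat.add_le_add_left h2 _
  have hcc : L.countP (fun e => decide (col e = t)) = colourCount col C.edges t := rfl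
  -- real arithmetic
  have hpos : 0 < L.countP P := by
    by_contra hzero
    push_neg at hzero
    have hP0 : L.countP P = 0 := Nat.le_zero.mp hzero
    have hccR := hunbal t
    rw [← hcc] at hccR
    have hnat : n ≤ 2 * F.card + L.countP (fun e => decide (col e = t)) := by omega
    have hsplit' : (n : ℝ) ≤ 2 * F.card + L.countP (fun e => decide (col e = t)) := by
      exact_mod_cast hnat
    have hFR : (F.card : ℝ) ≤ (n : ℝ) - G.degree v + Y.card + 2 := by
      have hc : ((n - G.degree v : ℕ) : ℝ) = (n : ℝ) - G.degree v := by
        rw [Nat.cast_sub hdegn]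
      calc (F.card : ℝ) ≤ ((n - G.degree v) + Y.card + 2 : ℕ) := by exact_mod_cast hFcard
        _ = (n : ℝ) - G.degree v + Y.card + 2 := by push_cast [hc]; ring
    have hdv : (G.minDegree : ℝ) ≤ G.degree v := by
      exact_mod_cast G.minDegree_le_degree v
    have hr0 : (0 : ℝ) < r := by positivity
    have e1 : ((1 : ℝ) / 2 + 1 / (2 * r)) * n = (n : ℝ) / 2 + ((n : ℝ) / r) / 2 := by
      field_simp
    rw [e1] at hδ
    have hYR : (Y.card : ℝ) ≤ 5 * d * r ^ 2 := by
      exact_mod_cast hY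
    have hd1 : (1 : ℝ) ≤ d := by exact_mod_cast hd
    have hr2 : (2 : ℝ) ≤ r := by exact_mod_cast hr
    have hr4 : (4 : ℝ) ≤ (r : ℝ) ^ 2 := by nlinarith
    have h8 : (8 : ℝ) * d ≤ 2 * d * r ^ 2 := by
      have hdd : (0 : ℝ) ≤ 2 * (d : ℝ) := by positivity
      have := mul_le_mul_of_nonneg_left hr4 hdd
      linarith
    linarith
  -- extract the edge
  obtain ⟨e, heL, heP⟩ := List.countP_pos_iff.mp hpos
  induction e using Sym2.ind with
  | _ z w =>
    rw [hP] at heP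
    simp only [Bool.and_eq_true, Bool.not_eq_true', decide_eq_false_iff_not] at heP
    obtain ⟨hnb, hcol⟩ := heP
    have hz : z ∉ F := fun hzF => hnb ⟨z, hzF, Sym2.mem_mk_left z w⟩
    have hw : w ∉ F := fun hwF => hnb ⟨w, hwF, Sym2.mem_mk_right z w⟩
    rw [hF] at hz hw
    simp only [Finset.mem_union, Finset.mem_filter, Finset.mem_univ, true_and,
      Finset.mem_insert, Finset.mem_singleton, not_or, not_not] at hz hw
    obtain ⟨⟨hzadj, hzY⟩, hzx, hzy⟩ := hz
    obtain ⟨⟨hwadj, hwY⟩, hwx, hwy⟩ := hw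
    exact ⟨z, w, heL, hzx, hzy, hwx, hwy, hzY, hzadj.ne', hwY, hwadj.ne', hzadj, hwadj, hcol⟩
end
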